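/- Let d ≥ 1. For λ > 0, O ∈ O(d), a row vector v ∈ ℝ^d, and α ∈ ℝ, define the (d+2)×(d+2) real matrix M(λ, O, v, α) = λ · [[1, 0, 0], [vᵀ, O, 0], [α + ‖v‖²/2, v O, 1]] (blocks of sizes 1, d, 1). Then for all parameters: M(λ, O, v, α) · M(λ', O', w, α') = M(λ λ', O O', v + w Oᵀ, α + α'). Consequently, the set of all such matrices is a subgroup of GL(d+2, ℝ), the inverse is given by M(λ, O, v, α)⁻¹ = M(λ⁻¹, Oᵀ, −v O, −α), and the maps M(λ, O, v, α) ↦ α and M(λ, O, v, α) ↦ λ are group homomorphisms to (ℝ, +) and to the multiplicative group of positive reals, respectively. -/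

import Mathlib

open Matrix

/-- The matrix `M(λ, O, v, α) = λ·[[1,0,0],[vᵀ,O,0],[α+‖v‖²/2, vO, 1]]`
(blocks of sizes `1, d, 1`). -/
noncomputable def stdMat (d : ℕ) (lam : ℝ) (O : Matrix (Fin d) (Fin d) ℝ)
    (v : Fin d → ℝ) (α : ℝ) :
    Matrix (Fin 1 ⊕ Fin d ⊕ Fin 1) (Fin 1 ⊕ Fin d ⊕ Fin 1) ℝ :=
  Matrix.of fun i j =>
    match i, j with
    | Sum.inl _, Sum.inl _ => lam
    | Sum.inl _, _ => 0
    | Sum.inr (Sum.inl k), Sum.inl _ => lam * v k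
    | Sum.inr (Sum.inl k), Sum.inr (Sum.inl l) => lam * O k l
    | Sum.inr (Sum.inl _), Sum.inr (Sum.inr _) => 0
    | Sum.inr (Sum.inr _), Sum.inl _ => lam * (α + dotProduct v v / 2)
    | Sum.inr (Sum.inr _), Sum.inr (Sum.inl l) => lam * vecMul v O l
    | Sum.inr (Sum.inr _), Sum.inr (Sum.inr _) => lam

private lemma sum_pull {ι : Type*} (s : Finset ι) (c c' : ℝ) (f g : ι → ℝ) :
    ∑ x ∈ s, (c * f x) * (c' * g x) = c * c' * ∑ x ∈ s, f x * g x := by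
  rw [Finset.mul_sum]; exact Finset.sum_congr rfl fun x _ => by ring

/-- The product formula `M(λ,O,v,α)·M(λ',O',w,α') = M(λλ', OO', v + wOᵀ, α + α')`. -/
lemma stdMat_mul (d : ℕ) (lam lam' : ℝ) (O O' : Matrix (Fin d) (Fin d) ℝ)
    (hO : Oᵀ * O = 1)
    (v w : Fin d → ℝ) (α α' : ℝ) :
    stdMat d lam O v α * stdMat d lam' O' w α' =
      stdMat d (lam * lam') (O * O') (v + vecMul w Oᵀ) (α + α') := by
  have key3 : vecMul (vecMul w Oᵀ) O = w := by
    rw [vecMul_vecMul, hO, vecMul_one]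
  have key2 : ∀ u : Fin d → ℝ, dotProduct u (vecMul w Oᵀ) = dotProduct (vecMul u O) w := by
    intro u; rw [vecMul_transpose, dotProduct_mulVec]
  have key1 : dotProduct (vecMul w Oᵀ) (vecMul w Oᵀ) = dotProduct w w := by
    rw [key2, key3]
  ext i j
  rcases i with i | i | i <;> rcases j with j | j | j <;>
    simp only [stdMat, Matrix.mul_apply, of_apply, Fintype.sum_sum_type,
      Fin.sum_univ_one, Pi.add_apply]
  · simp
  · simp
  · simp
  · rw [sum_pull, show ∑ x, O i x * w x = vecMul w Oᵀ i by
      simp [vecMul, dotProduct, mul_comm]]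
    simp; ring
  · rw [sum_pull, show ∑ x, O i x * O' x j = (O * O') i j from (Matrix.mul_apply).symm]
    simp
  · simp
  · rw [sum_pull, show ∑ x, vecMul v O x * w x = dotProduct (vecMul v O) w from rfl]
    rw [show dotProduct (v + vecMul w Oᵀ) (v + vecMul w Oᵀ)
        = dotProduct v v + 2 * dotProduct (vecMul v O) w + dotProduct w w by
      rw [dotProduct_add, add_dotProduct, add_dotProduct, key1, ← key2,
        dotProduct_comm (vecMul w Oᵀ) v, key2]; ring]
    ring
  · rw [sum_pull, show ∑ x, vecMul v O x * O' x j = vecMul (vecMul v O) O' j by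
      simp [vecMul, dotProduct]]
    rw [add_vecMul, ← vecMul_vecMul, ← vecMul_vecMul (vecMul w Oᵀ), key3]
    simp only [Pi.add_apply]; ring
  · simp

lemma stdMat_one (d : ℕ) :
    (1 : Matrix (Fin 1 ⊕ Fin d ⊕ Fin 1) (Fin 1 ⊕ Fin d ⊕ Fin 1) ℝ) = stdMat d 1 1 0 0 := by
  ext i j
  rcases i with i | i | i <;> rcases j with j | j | j <;>
    simp [stdMat, Matrix.one_apply, Fin.eq_zero]

lemma ortho_facts (d : ℕ) (O : Matrix (Fin d) (Fin d) ℝ)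
    (hO : O ∈ Matrix.orthogonalGroup (Fin d) ℝ) : Oᵀ * O = 1 ∧ O * Oᵀ = 1 := by
  constructor
  · have := (Matrix.mem_orthogonalGroup_iff' (Fin d) ℝ).mp hO
    simpa [star_eq_conjTranspose, conjTranspose] using this
  · have := (Matrix.mem_orthogonalGroup_iff (Fin d) ℝ).mp hO
    simpa [star_eq_conjTranspose, conjTranspose] using this

/-- equation (4.29) and Section 4.3 of the paper.
The matrices `M(λ, O, v, α)` (for `λ > 0`, `O ∈ O(d)`) satisfy the product formula
`M(λ,O,v,α)·M(λ',O',w,α') = M(λλ', OO', v + wOᵀ, α + α')`; consequently they form a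
subgroup of `GL(d+2, ℝ)` (it contains the identity, is closed under products, and
`M(λ,O,v,α)⁻¹ = M(λ⁻¹, Oᵀ, −vO, −α)`), the parameters are uniquely determined, and
`M ↦ α`, `M ↦ λ` are group homomorphisms to `(ℝ,+)` and to the positive reals. -/
theorem stmt6 (d : ℕ) (hd : 1 ≤ d) :
    -- product formula
    (∀ (lam lam' : ℝ), 0 < lam → 0 < lam' →
      ∀ (O O' : Matrix (Fin d) (Fin d) ℝ),
        O ∈ Matrix.orthogonalGroup (Fin d) ℝ → O' ∈ Matrix.orthogonalGroup (Fin d) ℝ →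
      ∀ (v w : Fin d → ℝ) (α α' : ℝ),
        stdMat d lam O v α * stdMat d lam' O' w α' =
          stdMat d (lam * lam') (O * O') (v + vecMul w Oᵀ) (α + α')) ∧
    -- the identity matrix is of this form
    ((1 : Matrix (Fin 1 ⊕ Fin d ⊕ Fin 1) (Fin 1 ⊕ Fin d ⊕ Fin 1) ℝ) =
      stdMat d 1 1 0 0) ∧
    -- inverse formula: `M(λ,O,v,α)⁻¹ = M(λ⁻¹, Oᵀ, −vO, −α)`
    (∀ (lam : ℝ), 0 < lam → ∀ O ∈ Matrix.orthogonalGroup (Fin d) ℝ,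
      ∀ (v : Fin d → ℝ) (α : ℝ),
        stdMat d lam O v α * stdMat d lam⁻¹ Oᵀ (-(vecMul v O)) (-α) = 1 ∧
        stdMat d lam⁻¹ Oᵀ (-(vecMul v O)) (-α) * stdMat d lam O v α = 1 ∧
        IsUnit (stdMat d lam O v α) ∧
        (stdMat d lam O v α)⁻¹ = stdMat d lam⁻¹ Oᵀ (-(vecMul v O)) (-α)) ∧
    -- the set of all such matrices is closed under multiplication (a subgroup of GL)
    (∀ A B : Matrix (Fin 1 ⊕ Fin d ⊕ Fin 1) (Fin 1 ⊕ Fin d ⊕ Fin 1) ℝ,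
      A ∈ {A | ∃ lam O v α, 0 < lam ∧ O ∈ Matrix.orthogonalGroup (Fin d) ℝ ∧
        A = stdMat d lam O v α} →
      B ∈ {A | ∃ lam O v α, 0 < lam ∧ O ∈ Matrix.orthogonalGroup (Fin d) ℝ ∧
        A = stdMat d lam O v α} →
      A * B ∈ {A | ∃ lam O v α, 0 < lam ∧ O ∈ Matrix.orthogonalGroup (Fin d) ℝ ∧
        A = stdMat d lam O v α}) ∧
    -- the parameters `λ, O, v, α` are uniquely determined (so that `M ↦ λ` and
    -- `M ↦ α` are well-defined group homomorphisms by the product formula)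
    (∀ (lam lam' : ℝ), 0 < lam → 0 < lam' →
      ∀ (O O' : Matrix (Fin d) (Fin d) ℝ) (v v' : Fin d → ℝ) (α α' : ℝ),
        stdMat d lam O v α = stdMat d lam' O' v' α' →
        lam = lam' ∧ O = O' ∧ v = v' ∧ α = α') := by
  refine ⟨?_, stdMat_one d, ?_, ?_, ?_⟩
  · intro lam lam' _ _ O O' hO _ v w α α'
    exact stdMat_mul d lam lam' O O' (ortho_facts d O hO).1 v w α α'
  · intro lam hlam O hO v α
    obtain ⟨h1, h2⟩ := ortho_facts d O hO
    have hne : lam ≠ 0 := ne_of_gt hlam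
    have hA : stdMat d lam O v α * stdMat d lam⁻¹ Oᵀ (-(vecMul v O)) (-α) = 1 := by
      rw [stdMat_mul d lam lam⁻¹ O Oᵀ h1,
        show v + vecMul (-(vecMul v O)) Oᵀ = 0 by
          rw [neg_vecMul, vecMul_vecMul, h2, vecMul_one]; simp,
        mul_inv_cancel₀ hne, h2, add_neg_cancel, ← stdMat_one]
    have hB : stdMat d lam⁻¹ Oᵀ (-(vecMul v O)) (-α) * stdMat d lam O v α = 1 := by
      rw [stdMat_mul d lam⁻¹ lam Oᵀ O (by rw [transpose_transpose]; exact h2),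
        show -(vecMul v O) + vecMul v Oᵀᵀ = 0 by rw [transpose_transpose]; simp,
        inv_mul_cancel₀ hne, h1, neg_add_cancel, ← stdMat_one]
    exact ⟨hA, hB, ⟨⟨_, _, hA, hB⟩, rfl⟩, Matrix.inv_eq_right_inv hA⟩
  · rintro A B ⟨lam, O, v, α, hl, hO, rfl⟩ ⟨lam', O', w, α', hl', hO', rfl⟩
    exact ⟨lam * lam', O * O', v + vecMul w Oᵀ, α + α', mul_pos hl hl',
      mul_mem hO hO', (stdMat_mul d lam lam' O O' (ortho_facts d O hO).1 v w α α')⟩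
  · intro lam lam' h h' O O' v v' α α' heq
    have hl : lam = lam' := by
      have := congrFun (congrFun heq (Sum.inl 0)) (Sum.inl 0)
      simpa [stdMat] using this
    have hne : lam ≠ 0 := ne_of_gt h
    have hv : v = v' := by
      funext k
      have := congrFun (congrFun heq (Sum.inr (Sum.inl k))) (Sum.inl 0)
      simp only [stdMat, of_apply] at this
      rw [← hl] at this
      exact mul_left_cancel₀ hne this
    have hO : O = O' := by
      ext k l
      have := congrFun (congrFun heq (Sum.inr (Sum.inl k))) (Sum.inr (Sum.inl l))
      simp only [stdMat, of_apply] at this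
      rw [← hl] at this
      exact mul_left_cancel₀ hne this
    have ha : α = α' := by
      have := congrFun (congrFun heq (Sum.inr (Sum.inr 0))) (Sum.inl 0)
      simp only [stdMat, of_apply] at this
      rw [← hl, ← hv] at this
      have := mul_left_cancel₀ hne this
      linarith
    exact ⟨hl, hO, hv, ha⟩
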